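/- Let d = 1 or d = 2. Then there exists an infinite set A of prime elements of ℤ[√−d] which is not fractionally dense in ℂ, i.e. whose quotient set R(A) = {x/y : x, y ∈ A} is not dense in ℂ (under the embedding of ℤ[√−d] into ℂ sending a + b√−d to a + b√d·i). -/

import Mathlib

open Zsqrtd in
theorem aux_dvd_of_norm {d p : ℕ} (hp : p.Prime)
    (hns : ¬ IsSquare (-(d : ZMod p))) {z : ℤ√(-(d:ℤ))}
    (h : (p : ℤ) ∣ z.norm) : ((p : ℤ) : ℤ√(-(d:ℤ))) ∣ z := by
  haveI := Fact.mk hp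
  have hnorm : z.norm = z.re * z.re + (d:ℤ) * (z.im * z.im) := by
    simp [Zsqrtd.norm]; ring
  rw [hnorm] at h
  have h0 : ((z.re : ZMod p) * z.re + (d : ZMod p) * ((z.im : ZMod p) * z.im)) = 0 := by
    have := (ZMod.intCast_zmod_eq_zero_iff_dvd _ p).mpr h
    push_cast at this ⊢
    exact_mod_cast this
  have him : (z.im : ZMod p) = 0 := by
    by_contra hne
    apply hns
    refine ⟨(z.re : ZMod p) / (z.im : ZMod p), ?_⟩
    field_simp
    linear_combination -h0
  have hre : (z.re : ZMod p) = 0 := by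
    have h2 : (z.re : ZMod p) * z.re = 0 := by rw [him] at h0; simpa using h0
    exact mul_self_eq_zero.mp h2
  rw [Zsqrtd.intCast_dvd]
  exact ⟨(ZMod.intCast_zmod_eq_zero_iff_dvd _ p).mp hre,
    (ZMod.intCast_zmod_eq_zero_iff_dvd _ p).mp him⟩

theorem aux_prime {d p : ℕ} (hp : p.Prime)
    (hns : ¬ IsSquare (-(d : ZMod p))) : Prime ((p : ℤ) : ℤ√(-(d:ℤ))) := by
  refine ⟨?_, ?_, ?_⟩
  · simp [Zsqrtd.ext_iff, hp.ne_zero]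
  · intro hu
    have h1 := Zsqrtd.norm_eq_one_iff.mpr hu
    rw [Zsqrtd.norm_intCast] at h1
    have : p * p = 1 := by simpa [Int.natAbs_mul] using h1
    exact hp.one_lt.ne' (Nat.eq_one_of_mul_eq_one_right this)
  · intro a b hab
    obtain ⟨c, hc⟩ := hab
    have hnc : (p:ℤ) ∣ a.norm * b.norm := by
      have := congrArg Zsqrtd.norm hc
      rw [Zsqrtd.norm_mul, Zsqrtd.norm_mul, Zsqrtd.norm_intCast] at this
      exact ⟨c.norm * p, by linarith [this]⟩
    have hpz : Prime (p : ℤ) := Nat.prime_iff_prime_int.mp hp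
    rcases hpz.dvd_mul.mp hnc with h | h
    · exact Or.inl (aux_dvd_of_norm hp hns h)
    · exact Or.inr (aux_dvd_of_norm hp hns h)

/-- Theorem 6: for `d = 1` or `d = 2`, there is an infinite set `A` of prime
elements of `ℤ[√-d]` (realized as the subring of `ℂ` generated by `√d * I`)
which is not fractionally dense in `ℂ`. -/
theorem stmt_16 (d : ℕ) (hd : d = 1 ∨ d = 2) :
    ∃ A : Set ↥(Subring.closure {((Real.sqrt d : ℂ) * Complex.I)}),
      A.Infinite ∧ (∀ α ∈ A, Prime α) ∧
      ¬ Dense {z : ℂ | ∃ x ∈ A, ∃ y ∈ A, (y : ℂ) ≠ 0 ∧ z = (x : ℂ) / (y : ℂ)} := by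
  set c : ℂ := (Real.sqrt d : ℂ) * Complex.I with hc_def
  have hdpos : (0:ℝ) ≤ (d:ℝ) := by positivity
  have hcc : c * c = ((-(d:ℤ) : ℤ) : ℂ) := by
    have h1 : (Real.sqrt d : ℝ) * Real.sqrt d = (d:ℝ) := Real.mul_self_sqrt hdpos
    have : c * c = ((Real.sqrt d * Real.sqrt d : ℝ) : ℂ) * (Complex.I * Complex.I) := by
      push_cast; ring
    rw [this, h1, Complex.I_mul_I]
    push_cast; ring
  set φ : ℤ√(-(d:ℤ)) →+* ℂ := Zsqrtd.lift ⟨c, hcc⟩ with hφ_def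
  have hφ_apply : ∀ z : ℤ√(-(d:ℤ)), φ z = (z.re : ℂ) + (z.im : ℂ) * c := fun z => rfl
  have hinj : Function.Injective φ := by
    apply Zsqrtd.lift_injective
    intro n hn
    have hd1 : 1 ≤ (d:ℤ) := by omega
    nlinarith [mul_self_nonneg n]
  have hrange : φ.range = Subring.closure {c} := by
    apply le_antisymm
    · rintro x ⟨z, rfl⟩
      rw [hφ_apply]
      exact Subring.add_mem _ (intCast_mem _ z.re)
        (Subring.mul_mem _ (intCast_mem _ z.im) (Subring.subset_closure rfl))
    · rw [Subring.closure_le]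
      rintro x hx
      rw [Set.mem_singleton_iff] at hx
      exact ⟨Zsqrtd.sqrtd, by rw [hφ_apply, hx]; simp⟩
  set e : ℤ√(-(d:ℤ)) ≃+* ↥(Subring.closure {c}) :=
    (RingEquiv.ofLeftInverse (Function.leftInverse_invFun hinj)).trans
      (RingEquiv.subringCongr hrange) with he_def
  have hecoe : ∀ z : ℤ√(-(d:ℤ)), ((e z : ↥(Subring.closure {c})) : ℂ) = φ z := fun z => rfl
  set f : ℕ → ↥(Subring.closure {c}) := fun p => e ((p : ℤ) : ℤ√(-(d:ℤ))) with hf_def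
  have hfcoe : ∀ p : ℕ, ((f p : ↥(Subring.closure {c})) : ℂ) = (p : ℂ) := by
    intro p
    rw [hf_def]
    simp only [hecoe]
    rw [map_intCast]
    push_cast; ring
  set S : Set ℕ := {p : ℕ | p.Prime ∧ (p : ZMod 8) = 7} with hS_def
  have hSmod : ∀ p ∈ S, p % 8 = 7 := by
    intro p hp
    have h := congrArg ZMod.val hp.2
    rwa [ZMod.val_natCast] at h
  refine ⟨f '' S, ?_, ?_, ?_⟩
  · apply Set.Infinite.image
    · intro a _ b _ hab
      have h2 := congrArg (fun x : ↥(Subring.closure {c}) => (x : ℂ)) hab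
      simp only [hfcoe] at h2
      exact_mod_cast h2
    · exact Nat.infinite_setOfPred_prime_and_eq_mod (q := 8) (a := 7) (by decide)
  · rintro α ⟨p, ⟨hp, hpm⟩, rfl⟩
    haveI := Fact.mk hp
    have hm8 : p % 8 = 7 := hSmod p ⟨hp, hpm⟩
    have hns : ¬ IsSquare (-(d : ZMod p)) := by
      rcases hd with rfl | rfl
      · intro hsq
        have := ZMod.exists_sq_eq_neg_one_iff.mp (by simpa using hsq)
        omega
      · intro hsq
        have hp2 : p ≠ 2 := by omega
        have := (ZMod.exists_sq_eq_neg_two_iff hp2).mp (by push_cast at hsq ⊢; simpa using hsq)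
        omega
    exact (MulEquiv.prime_iff e.toMulEquiv).mpr (aux_prime hp hns)
  · intro hD
    have hsub : {z : ℂ | ∃ x ∈ f '' S, ∃ y ∈ f '' S, (y : ℂ) ≠ 0 ∧ z = (x : ℂ) / (y : ℂ)} ⊆
        {z : ℂ | z.im = 0} := by
      rintro z ⟨x, ⟨p, _, rfl⟩, y, ⟨q, _, rfl⟩, hy0, rfl⟩
      show (((f p : ↥(Subring.closure {c})) : ℂ) / ((f q : ↥(Subring.closure {c})) : ℂ)).im = 0
      rw [hfcoe p, hfcoe q, ← Complex.ofReal_natCast p, ← Complex.ofReal_natCast q,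
        ← Complex.ofReal_div]
      exact Complex.ofReal_im _
    have hclosed : IsClosed {z : ℂ | z.im = 0} := isClosed_eq Complex.continuous_im continuous_const
    have hI : Complex.I ∈ closure {z : ℂ | ∃ x ∈ f '' S, ∃ y ∈ f '' S,
        (y : ℂ) ≠ 0 ∧ z = (x : ℂ) / (y : ℂ)} := hD Complex.I
    have : Complex.I ∈ {z : ℂ | z.im = 0} := closure_minimal hsub hclosed hI
    simp [Complex.I_im] at this
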